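/- arXiv:1803.08602 — 2 statements merged into one kernel-verified Lean document; each statement's English description precedes it below -/
import Mathlib

section
/- Let n be a positive integer, γ > 0, and let s, t ∈ ℝ^n have all entries nonnegative. If ∑_{i=1}^n (t_i + γ)/(s_i + γ) ≤ n (equivalently, ∑_i t_i/(s_i + γ) ≤ ∑_i s_i/(s_i + γ)) and t ≠ s, then ∑_{i=1}^n log(t_i + γ) < ∑_{i=1}^n log(s_i + γ). -/
/-- Strict descent for the log surrogate: if `∑ (t_i + γ)/(s_i + γ) ≤ n` and `t ≠ s`, then
`∑ log(t_i + γ) < ∑ log(s_i + γ)`. -/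
theorem log_surrogate_strict_descent
    (n : ℕ) (hn : 0 < n) (γ : ℝ) (hγ : 0 < γ)
    (s t : Fin n → ℝ) (hs : ∀ i, 0 ≤ s i) (ht : ∀ i, 0 ≤ t i)
    (hsum : ∑ i, (t i + γ) / (s i + γ) ≤ (n : ℝ))
    (hne : t ≠ s) :
    ∑ i, Real.log (t i + γ) < ∑ i, Real.log (s i + γ) := by
  have hsp : ∀ i, 0 < s i + γ := fun i => by linarith [hs i]
  have htp : ∀ i, 0 < t i + γ := fun i => by linarith [ht i]
  set r : Fin n → ℝ := fun i => (t i + γ) / (s i + γ) with hr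
  have hrp : ∀ i, 0 < r i := fun i => div_pos (htp i) (hsp i)
  have hlogr : ∀ i, Real.log (r i) = Real.log (t i + γ) - Real.log (s i + γ) :=
    fun i => Real.log_div (ne_of_gt (htp i)) (ne_of_gt (hsp i))
  -- exists j with t j ≠ s j, hence r j ≠ 1
  obtain ⟨j, hj⟩ := Function.ne_iff.mp hne
  have hrj : r j ≠ 1 := by
    intro h
    apply hj
    have := (div_eq_one_iff_eq (ne_of_gt (hsp j))).mp h
    linarith
  have hle : ∀ i ∈ Finset.univ, Real.log (r i) ≤ r i - 1 :=
    fun i _ => Real.log_le_sub_one_of_pos (hrp i)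
  have hlt : Real.log (r j) < r j - 1 := Real.log_lt_sub_one_of_pos (hrp j) hrj
  have hsum1 : ∑ i, Real.log (r i) < ∑ i, (r i - 1) :=
    Finset.sum_lt_sum hle ⟨j, Finset.mem_univ j, hlt⟩
  have hsum2 : ∑ i, (r i - 1) ≤ 0 := by
    rw [Finset.sum_sub_distrib]
    simp only [Finset.sum_const, Finset.card_univ, Fintype.card_fin, nsmul_eq_mul, mul_one]
    linarith
  have : ∑ i, Real.log (r i) < 0 := lt_of_lt_of_le hsum1 hsum2
  have heq : ∑ i, Real.log (r i) = ∑ i, Real.log (t i + γ) - ∑ i, Real.log (s i + γ) := by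
    rw [← Finset.sum_sub_distrib]
    exact Finset.sum_congr rfl fun i _ => hlogr i
  linarith [heq ▸ this]
end

section
/- Let n be a positive integer, γ > 0, and let C ⊆ {s ∈ ℝ^n : s_i ≥ 0 for all i} be a nonempty compact convex set. Define a sequence by choosing s^{(0)} ∈ C and, for each l ≥ 0, choosing s^{(l+1)} ∈ C to be a minimizer over C of the linearized objective s ↦ ∑_{i=1}^n s_i/(s_i^{(l)} + γ). Then: (a) the sequence of objective values L(s^{(l)}) = ∑_{i=1}^n log(s_i^{(l)} + γ) is non-increasing and converges; and (b) there exists a convergent subsequence of (s^{(l)}) whose limit s̄ ∈ C is a stationary point of L on C, i.e. ∑_{i=1}^n s̄_i/(s̄_i + γ) ≤ ∑_{i=1}^n s_i/(s̄_i + γ) for all s ∈ C. -/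
/-- Concavity-type bound: `log (y+γ) - log (x+γ) ≤ (y-x)/(x+γ)` for nonnegative `x, y`. -/
lemma log_lin_bound (γ x y : ℝ) (hγ : 0 < γ) (hx : 0 ≤ x) (hy : 0 ≤ y) :
    Real.log (y + γ) - Real.log (x + γ) ≤ (y - x) / (x + γ) := by
  have hxγ : 0 < x + γ := by linarith
  have hyγ : 0 < y + γ := by linarith
  have h := Real.log_le_sub_one_of_pos (div_pos hyγ hxγ)
  rw [Real.log_div (ne_of_gt hyγ) (ne_of_gt hxγ)] at h
  have : (y + γ) / (x + γ) - 1 = (y - x) / (x + γ) := by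
    field_simp
    ring
  linarith [h, this ▸ h]

set_option maxHeartbeats 1000000 in
/-- Convergence of the iteratively reweighted algorithm: along iterates that minimize the
linearized objective over a nonempty compact convex subset `C` of the nonnegative orthant,
(a) the surrogate values `L(s^{(l)}) = ∑ log(s_i^{(l)} + γ)` are non-increasing and converge, and
(b) some subsequence of the iterates converges to a stationary point of `L` on `C`. -/
theorem reweighted_algorithm_convergence
    (n : ℕ) (hn : 0 < n) (γ : ℝ) (hγ : 0 < γ)
    (C : Set (Fin n → ℝ)) (hCnonneg : ∀ s ∈ C, ∀ i, 0 ≤ s i)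
    (hCne : C.Nonempty) (hCcompact : IsCompact C) (hCconvex : Convex ℝ C)
    (seq : ℕ → (Fin n → ℝ)) (h0 : seq 0 ∈ C)
    (hmem : ∀ l, seq (l + 1) ∈ C)
    (hmin : ∀ l, ∀ s ∈ C,
      ∑ i, seq (l + 1) i / (seq l i + γ) ≤ ∑ i, s i / (seq l i + γ)) :
    (Antitone fun l => ∑ i, Real.log (seq l i + γ)) ∧
    (∃ c : ℝ, Filter.Tendsto (fun l => ∑ i, Real.log (seq l i + γ))
        Filter.atTop (nhds c)) ∧
    (∃ (φ : ℕ → ℕ) (sbar : Fin n → ℝ), StrictMono φ ∧ sbar ∈ C ∧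
      Filter.Tendsto (fun l => seq (φ l)) Filter.atTop (nhds sbar) ∧
      ∀ s ∈ C, ∑ i, sbar i / (sbar i + γ) ≤ ∑ i, s i / (sbar i + γ)) := by
  have hseqC : ∀ l, seq l ∈ C := by
    intro l
    cases l with
    | zero => exact h0
    | succ m => exact hmem m
  set L : (Fin n → ℝ) → ℝ := fun s => ∑ i, Real.log (s i + γ) with hL
  -- the key descent inequality
  have hdescent : ∀ l, ∀ s ∈ C,
      L (seq (l + 1)) - L (seq l) ≤
        ∑ i, s i / (seq l i + γ) - ∑ i, seq l i / (seq l i + γ) := by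
    intro l s hs
    have h1 : L (seq (l + 1)) - L (seq l)
        ≤ ∑ i, (seq (l + 1) i - seq l i) / (seq l i + γ) := by
      rw [hL]
      simp only
      rw [← Finset.sum_sub_distrib]
      apply Finset.sum_le_sum
      intro i _
      exact log_lin_bound γ (seq l i) (seq (l + 1) i) hγ
        (hCnonneg _ (hseqC l) i) (hCnonneg _ (hmem l) i)
    have h2 : ∑ i, (seq (l + 1) i - seq l i) / (seq l i + γ)
        = ∑ i, seq (l + 1) i / (seq l i + γ) - ∑ i, seq l i / (seq l i + γ) := by
      rw [← Finset.sum_sub_distrib]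
      apply Finset.sum_congr rfl
      intro i _
      ring
    have h3 := hmin l s hs
    linarith [h1, h2 ▸ h1]
  -- (a) antitone
  have hanti : Antitone fun l => L (seq l) := by
    apply antitone_nat_of_succ_le
    intro l
    have := hdescent l (seq l) (hseqC l)
    linarith
  -- bounded below: L attains a min on compact C
  have hLcont : ContinuousOn L C := by
    apply continuousOn_finset_sum
    intro i _
    intro s hs
    have hpos : s i + γ > 0 := by
      have := hCnonneg s hs i; linarith
    have hca : ContinuousAt (fun y : Fin n → ℝ => Real.log (y i + γ)) s :=
      ContinuousAt.log (((continuous_apply i).add continuous_const).continuousAt)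
        (ne_of_gt hpos)
    exact hca.continuousWithinAt
  obtain ⟨m, hmC, hmle⟩ := hCcompact.exists_isMinOn hCne hLcont
  have hbdd : BddBelow (Set.range fun l => L (seq l)) := by
    refine ⟨L m, ?_⟩
    rintro x ⟨l, rfl⟩
    exact hmle (hseqC l)
  have hconv : Filter.Tendsto (fun l => L (seq l)) Filter.atTop
      (nhds (⨅ l, L (seq l))) := tendsto_atTop_ciInf hanti hbdd
  refine ⟨hanti, ⟨_, hconv⟩, ?_⟩
  -- (b) subsequence
  obtain ⟨sbar, hsbarC, φ, hφ, hφconv⟩ := hCcompact.tendsto_subseq hseqC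
  refine ⟨φ, sbar, hφ, hsbarC, hφconv, ?_⟩
  intro s hs
  -- denominators at sbar are positive
  have hden : ∀ i, sbar i + γ ≠ 0 := by
    intro i
    have := hCnonneg sbar hsbarC i
    positivity
  -- A l := linear gap at seq (φ l); it tends to the gap at sbar
  have hcontF : ∀ (v : Fin n → ℝ), Filter.Tendsto
      (fun l => ∑ i, v i / (seq (φ l) i + γ)) Filter.atTop
      (nhds (∑ i, v i / (sbar i + γ))) := by
    intro v
    have : ContinuousAt (fun y : Fin n → ℝ => ∑ i, v i / (y i + γ)) sbar := by
      apply tendsto_finset_sum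
      intro i _
      exact (continuousAt_const).div
        (((continuous_apply i).add continuous_const).continuousAt) (hden i)
    exact this.tendsto.comp hφconv
  have hcontG : Filter.Tendsto
      (fun l => ∑ i, seq (φ l) i / (seq (φ l) i + γ)) Filter.atTop
      (nhds (∑ i, sbar i / (sbar i + γ))) := by
    have : ContinuousAt (fun y : Fin n → ℝ => ∑ i, y i / (y i + γ)) sbar := by
      apply tendsto_finset_sum
      intro i _
      exact ((continuous_apply i).continuousAt).div
        (((continuous_apply i).add continuous_const).continuousAt) (hden i)
    exact this.tendsto.comp hφconv
  have hA : Filter.Tendsto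
      (fun l => ∑ i, s i / (seq (φ l) i + γ) - ∑ i, seq (φ l) i / (seq (φ l) i + γ))
      Filter.atTop (nhds (∑ i, s i / (sbar i + γ) - ∑ i, sbar i / (sbar i + γ))) :=
    (hcontF s).sub hcontG
  -- B l := L (seq (φ l + 1)) - L (seq (φ l)) tends to 0
  have hφtop : Filter.Tendsto φ Filter.atTop Filter.atTop := hφ.tendsto_atTop
  have hφ1top : Filter.Tendsto (fun l => φ l + 1) Filter.atTop Filter.atTop :=
    Filter.tendsto_atTop_mono (fun l => Nat.le_succ (φ l)) hφtop
  have hB : Filter.Tendsto (fun l => L (seq (φ l + 1)) - L (seq (φ l)))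
      Filter.atTop (nhds 0) := by
    have h1 := hconv.comp hφ1top
    have h2 := hconv.comp hφtop
    have := h1.sub h2
    simpa using this
  have hle : ∀ l, L (seq (φ l + 1)) - L (seq (φ l)) ≤
      ∑ i, s i / (seq (φ l) i + γ) - ∑ i, seq (φ l) i / (seq (φ l) i + γ) :=
    fun l => hdescent (φ l) s hs
  have := le_of_tendsto_of_tendsto' hB hA hle
  linarith
end
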